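/- Let h : [0,∞) → R^q be differentiable and Γ : [0,∞) → R^{q×q} continuous with Γ(t) Metzler for all t. If h(0) ≥ 0 componentwise and h'(t) ≥ Γ(t) h(t) componentwise for all t ≥ 0, then h(t) ≥ 0 componentwise for all t ≥ 0. -/

import Mathlib

def IsMetzler {q : ℕ} (K : Matrix (Fin q) (Fin q) ℝ) : Prop :=
  ∀ i j, i ≠ j → 0 ≤ K i j

theorem stmt8 {q : ℕ}
    (h : ℝ → Fin q → ℝ)
    (Γ : ℝ → Matrix (Fin q) (Fin q) ℝ)
    (hΓc : Continuous Γ)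
    (hΓM : ∀ t, 0 ≤ t → IsMetzler (Γ t))
    (hhdiff : ∀ i, Differentiable ℝ (fun t => h t i))
    (hhineq : ∀ t, 0 ≤ t → ∀ i,
      ∑ j, Γ t i j * h t j ≤ deriv (fun s => h s i) t)
    (h0 : ∀ i, 0 ≤ h 0 i) :
    ∀ t, 0 ≤ t → ∀ i, 0 ≤ h t i := by
  intro T hT istar
  by_contra hneg
  push_neg at hneg
  -- continuity of entries of Γ
  have hΓij : ∀ i j : Fin q, Continuous fun t => Γ t i j := by
    intro i j
    exact (continuous_apply j).comp ((continuous_apply i).comp hΓc)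
  -- bound on Γ on [0,T]
  set F : ℝ → ℝ := fun t => ∑ i : Fin q, ∑ j : Fin q, |Γ t i j| with hF
  have hFc : Continuous F := by
    apply continuous_finset_sum
    intro i _
    apply continuous_finset_sum
    intro j _
    exact (hΓij i j).abs
  obtain ⟨C, hC⟩ := (isCompact_Icc (a := (0:ℝ)) (b := T)).exists_bound_of_continuousOn
    hFc.continuousOn
  have hFnonneg : ∀ t, 0 ≤ F t := by
    intro t
    apply Finset.sum_nonneg
    intro i _
    exact Finset.sum_nonneg fun j _ => abs_nonneg _
  have hCbound : ∀ t ∈ Set.Icc (0:ℝ) T, ∀ i : Fin q, ∑ j, Γ t i j ≤ C := by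
    intro t ht i
    calc ∑ j, Γ t i j ≤ ∑ j, |Γ t i j| :=
          Finset.sum_le_sum fun j _ => le_abs_self _
      _ ≤ F t := Finset.single_le_sum
          (f := fun i => ∑ j, |Γ t i j|)
          (fun i _ => Finset.sum_nonneg fun j _ => abs_nonneg _)
          (Finset.mem_univ i)
      _ ≤ ‖F t‖ := le_abs_self _
      _ ≤ C := hC t ht
  set lam : ℝ := C + 1 with hlam
  set ε : ℝ := -h T istar / (2 * Real.exp (lam * T)) with hε
  have hεpos : 0 < ε := by
    apply div_pos (by linarith) (by positivity)
  set v : ℝ → Fin q → ℝ := fun t i => h t i + ε * Real.exp (lam * t) with hv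
  have hvc : ∀ i : Fin q, Continuous fun t => v t i := by
    intro i
    exact ((hhdiff i).continuous).add (by continuity)
  -- the bad set
  set S : Set ℝ := {t ∈ Set.Icc (0:ℝ) T | ∃ i, v t i ≤ 0} with hS
  have hSclosed : IsClosed S := by
    have : S = Set.Icc (0:ℝ) T ∩ ⋃ i : Fin q, {t | v t i ≤ 0} := by
      ext t; simp [hS, Set.mem_setOf_eq]
    rw [this]
    exact isClosed_Icc.inter (isClosed_iUnion_of_finite fun i =>
      isClosed_le (hvc i) continuous_const)
  have hTS : T ∈ S := by
    refine ⟨Set.right_mem_Icc.2 hT, istar, ?_⟩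
    have hexp : 0 < Real.exp (lam * T) := Real.exp_pos _
    have heq : ε * Real.exp (lam * T) = -h T istar / 2 := by
      rw [hε]; field_simp
    have : v T istar = h T istar + ε * Real.exp (lam * T) := rfl
    rw [this, heq]
    linarith
  have hSne : S.Nonempty := ⟨T, hTS⟩
  have hSbdd : BddBelow S := ⟨0, fun t ht => ht.1.1⟩
  set t₀ : ℝ := sInf S with ht₀
  have ht₀S : t₀ ∈ S := hSclosed.csInf_mem hSne hSbdd
  have ht₀lb : ∀ t ∈ S, t₀ ≤ t := fun t ht => csInf_le hSbdd ht
  have ht₀Icc : t₀ ∈ Set.Icc (0:ℝ) T := ht₀S.1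
  have hv0 : ∀ i, 0 < v 0 i := by
    intro i
    have : v 0 i = h 0 i + ε * Real.exp (lam * 0) := rfl
    rw [this]
    have := h0 i
    nlinarith [Real.exp_pos (lam * 0)]
  have ht₀pos : 0 < t₀ := by
    rcases lt_or_eq_of_le ht₀Icc.1 with h' | h'
    · exact h'
    · exfalso
      obtain ⟨_, i, hi⟩ := ht₀S
      rw [← h'] at hi
      exact absurd hi (not_le.2 (hv0 i))
  -- positivity before t₀
  have hpos : ∀ t ∈ Set.Ico (0:ℝ) t₀, ∀ j, 0 < v t j := by
    intro t ht j
    by_contra hc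
    push_neg at hc
    have htS : t ∈ S := ⟨⟨ht.1, ht.2.le.trans ht₀Icc.2⟩, j, hc⟩
    exact absurd (ht₀lb t htS) (not_le.2 ht.2)
  -- nonnegativity at t₀
  have hge : ∀ j, 0 ≤ v t₀ j := by
    intro j
    have hmem : Set.Ioo (0:ℝ) t₀ ∈ nhdsWithin t₀ (Set.Iio t₀) :=
      Ioo_mem_nhdsLT_of_mem ⟨ht₀pos, le_refl _⟩
    have htend : Filter.Tendsto (fun t => v t j) (nhdsWithin t₀ (Set.Iio t₀)) (nhds (v t₀ j)) :=
      ((hvc j).continuousAt).continuousWithinAt.tendsto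
    refine ge_of_tendsto htend ?_
    filter_upwards [hmem] with t ht
    exact (hpos t ⟨ht.1.le, ht.2⟩ j).le
  obtain ⟨_, i₀, hi₀⟩ := ht₀S
  have hvi₀ : v t₀ i₀ = 0 := le_antisymm hi₀ (hge i₀)
  -- derivative of v i₀ at t₀
  have hexpD : HasDerivAt (fun t => ε * Real.exp (lam * t))
      (ε * (lam * Real.exp (lam * t₀))) t₀ := by
    have h1 : HasDerivAt (fun t : ℝ => lam * t) lam t₀ := by
      simpa using (hasDerivAt_id t₀).const_mul lam
    have h2 := (Real.hasDerivAt_exp (lam * t₀)).comp t₀ h1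
    have h3 := h2.const_mul ε
    rw [show ε * (lam * Real.exp (lam * t₀)) = ε * (Real.exp (lam * t₀) * lam) by ring]
    exact h3
  set D : ℝ := deriv (fun s => h s i₀) t₀ + ε * (lam * Real.exp (lam * t₀)) with hD
  have hvD : HasDerivAt (fun t => v t i₀) D t₀ :=
    ((hhdiff i₀ t₀).hasDerivAt).add hexpD
  -- D ≤ 0 from min at t₀
  have hDle : D ≤ 0 := by
    have hslope := hasDerivAt_iff_tendsto_slope.1 hvD
    have hmono : nhdsWithin t₀ (Set.Iio t₀) ≤ nhdsWithin t₀ {t₀}ᶜ :=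
      nhdsWithin_mono t₀ (fun x hx => ne_of_lt hx)
    have htend := hslope.mono_left hmono
    refine le_of_tendsto htend ?_
    have hmem : Set.Ioo (0:ℝ) t₀ ∈ nhdsWithin t₀ (Set.Iio t₀) :=
      Ioo_mem_nhdsLT_of_mem ⟨ht₀pos, le_refl _⟩
    filter_upwards [hmem] with t ht
    have h1 : 0 < v t i₀ := hpos t ⟨ht.1.le, ht.2⟩ i₀
    have h2 : t - t₀ < 0 := by linarith [ht.2]
    have : slope (fun t => v t i₀) t₀ t = (v t i₀ - v t₀ i₀) / (t - t₀) := by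
      rw [slope_def_field]
    rw [this, hvi₀]
    apply div_nonpos_of_nonneg_of_nonpos <;> linarith
  -- D > 0 from the differential inequality
  have hsum : 0 ≤ ∑ j, Γ t₀ i₀ j * v t₀ j := by
    apply Finset.sum_nonneg
    intro j _
    by_cases hj : j = i₀
    · rw [hj, hvi₀]; simp
    · exact mul_nonneg (hΓM t₀ ht₀Icc.1 i₀ j (fun hc => hj hc.symm)) (hge j)
  have hhval : ∀ j, h t₀ j = v t₀ j - ε * Real.exp (lam * t₀) := fun j => by
    simp only [hv]; ring
  have hineq := hhineq t₀ ht₀Icc.1 i₀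
  have hsum2 : ∑ j, Γ t₀ i₀ j * h t₀ j
      = (∑ j, Γ t₀ i₀ j * v t₀ j) - (∑ j, Γ t₀ i₀ j) * (ε * Real.exp (lam * t₀)) := by
    rw [Finset.sum_mul, ← Finset.sum_sub_distrib]
    apply Finset.sum_congr rfl
    intro j _
    rw [hhval j]; ring
  have hΓsum : ∑ j, Γ t₀ i₀ j ≤ C := hCbound t₀ ht₀Icc i₀
  have hexpos : 0 < Real.exp (lam * t₀) := Real.exp_pos _
  have hDpos : 0 < D := by
    rw [hD]
    have h1 : ∑ j, Γ t₀ i₀ j * h t₀ j ≤ deriv (fun s => h s i₀) t₀ := hineq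
    rw [hsum2] at h1
    nlinarith [mul_pos hεpos hexpos]
  linarith
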